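/- Let θ₁, θ₂ be unital *-endomorphisms of B(G) and v₁, v₂ isometries in B(G) with θ_i(a)v_i = v_i a for all a ∈ B(G). Then the map T on B(G ⊕ G) given in block form by T([[a₁₁,a₁₂],[a₂₁,a₂₂]]) = [[θ₁(a₁₁), v₁ a₁₂ v₂*],[v₂ a₂₁ v₁*, θ₂(a₂₂)]] is a unital, *-preserving, completely positive map. -/

import Mathlib

set_option maxHeartbeats 1000000
set_option synthInstance.maxHeartbeats 400000

noncomputable section Statement15Aux

open ContinuousLinearMap

variable {G : Type*} [NormedAddCommGroup G] [InnerProductSpace ℂ G] [CompleteSpace G]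

local notation "H2" => WithLp 2 (G × G)
local notation "⟪" x ", " y "⟫" => @inner ℂ _ _ x y

private def eqv : WithLp 2 (G × G) ≃L[ℂ] G × G := WithLp.prodContinuousLinearEquiv 2 ℂ G G

private def Pc : Fin 2 → (WithLp 2 (G × G) →L[ℂ] G) :=
  ![(ContinuousLinearMap.fst ℂ G G).comp (eqv : WithLp 2 (G × G) ≃L[ℂ] G × G).toContinuousLinearMap,
    (ContinuousLinearMap.snd ℂ G G).comp (eqv : WithLp 2 (G × G) ≃L[ℂ] G × G).toContinuousLinearMap]

private def Jc : Fin 2 → (G →L[ℂ] WithLp 2 (G × G)) :=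
  ![(eqv : WithLp 2 (G × G) ≃L[ℂ] G × G).symm.toContinuousLinearMap.comp
      (ContinuousLinearMap.inl ℂ G G),
    (eqv : WithLp 2 (G × G) ≃L[ℂ] G × G).symm.toContinuousLinearMap.comp
      (ContinuousLinearMap.inr ℂ G G)]

private lemma Pc_Jc (i j : Fin 2) (g : G) : Pc i (Jc j g) = if i = j then g else 0 := by
  fin_cases i <;> fin_cases j <;> simp [Pc, Jc, eqv]

private lemma sum_Jc_Pc (x : WithLp 2 (G × G)) : ∑ i, Jc i (Pc i x) = x := by
  simp only [Fin.sum_univ_two, Pc, Jc, Matrix.cons_val_zero, Matrix.cons_val_one,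
    Matrix.head_cons, ContinuousLinearMap.comp_apply, ContinuousLinearEquiv.coe_coe]
  rw [← map_add]
  have : (ContinuousLinearMap.inl ℂ G G) ((ContinuousLinearMap.fst ℂ G G) (eqv x)) +
      (ContinuousLinearMap.inr ℂ G G) ((ContinuousLinearMap.snd ℂ G G) (eqv x)) = eqv x := by
    ext <;> simp
  rw [this, ContinuousLinearEquiv.symm_apply_apply]

private lemma inner_eq_sum (x y : WithLp 2 (G × G)) :
    ⟪x, y⟫ = ∑ i, ⟪Pc i x, Pc i y⟫ := by
  rw [WithLp.prod_inner_apply]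
  simp [Fin.sum_univ_two, Pc, eqv]

private lemma Jc_adj (i : Fin 2) (g : G) (y : WithLp 2 (G × G)) :
    ⟪Jc i g, y⟫ = ⟪g, Pc i y⟫ := by
  rw [inner_eq_sum]
  rw [Finset.sum_eq_single i]
  · rw [Pc_Jc]; simp
  · intro b _ hb; rw [Pc_Jc]; simp [hb]
  · simp

private def toOp (m : Matrix (Fin 2) (Fin 2) (G →L[ℂ] G)) :
    WithLp 2 (G × G) →L[ℂ] WithLp 2 (G × G) :=
  ∑ i, ∑ j, (Jc i).comp ((m i j).comp (Pc j))

private lemma toOp_apply (m : Matrix (Fin 2) (Fin 2) (G →L[ℂ] G)) (x : WithLp 2 (G × G)) :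
    toOp m x = ∑ i, ∑ j, Jc i (m i j (Pc j x)) := by
  simp [toOp]

private lemma Pc_toOp (m : Matrix (Fin 2) (Fin 2) (G →L[ℂ] G)) (x : WithLp 2 (G × G))
    (k : Fin 2) : Pc k (toOp m x) = ∑ j, m k j (Pc j x) := by
  rw [toOp_apply, map_sum]
  rw [Finset.sum_eq_single k]
  · rw [map_sum]; simp [Pc_Jc]
  · intro b _ hb; rw [map_sum]; simp [Pc_Jc, hb.symm]
  · simp

private lemma toOp_add (m m' : Matrix (Fin 2) (Fin 2) (G →L[ℂ] G)) :
    toOp (m + m') = toOp m + toOp m' := by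
  ext x
  simp [toOp_apply, Matrix.add_apply, Finset.sum_add_distrib]

private lemma toOp_mul (m m' : Matrix (Fin 2) (Fin 2) (G →L[ℂ] G)) :
    toOp (m * m') = toOp m * toOp m' := by
  ext x
  rw [ContinuousLinearMap.mul_apply, toOp_apply, toOp_apply]
  refine Finset.sum_congr rfl fun i _ => ?_
  rw [← map_sum, ← map_sum]
  congr 1
  calc ∑ j, (m * m') i j (Pc j x)
      = ∑ j, ∑ k, m i k (m' k j (Pc j x)) := by
        refine Finset.sum_congr rfl fun j _ => ?_
        rw [Matrix.mul_apply]
        simp [ContinuousLinearMap.mul_apply]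
    _ = ∑ k, m i k (Pc k (toOp m' x)) := by
        rw [Finset.sum_comm]
        refine Finset.sum_congr rfl fun k _ => ?_
        rw [Pc_toOp, map_sum]

private lemma toOp_star (m : Matrix (Fin 2) (Fin 2) (G →L[ℂ] G)) :
    toOp (star m) = star (toOp m) := by
  rw [ContinuousLinearMap.star_eq_adjoint, ContinuousLinearMap.eq_adjoint_iff]
  intro x y
  have L : ∀ i, ⟪∑ j, Jc i ((star m) i j (Pc j x)), y⟫ = ∑ j, ⟪Pc j x, m j i (Pc i y)⟫ := by
    intro i
    rw [sum_inner]
    refine Finset.sum_congr rfl fun j _ => ?_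
    rw [Jc_adj, Matrix.star_apply, ContinuousLinearMap.star_eq_adjoint,
      ContinuousLinearMap.adjoint_inner_left]
  rw [toOp_apply, sum_inner]
  simp only [L]
  rw [Finset.sum_comm, inner_eq_sum x (toOp m y)]
  refine Finset.sum_congr rfl fun j _ => ?_
  rw [Pc_toOp, inner_sum]

private def toMat (S : WithLp 2 (G × G) →L[ℂ] WithLp 2 (G × G)) :
    Matrix (Fin 2) (Fin 2) (G →L[ℂ] G) :=
  Matrix.of fun i j => (Pc i).comp (S.comp (Jc j))

private lemma toOp_toMat (S : WithLp 2 (G × G) →L[ℂ] WithLp 2 (G × G)) :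
    toOp (toMat S) = S := by
  ext x
  rw [toOp_apply]
  have : ∀ i j, (toMat S) i j (Pc j x) = Pc i (S (Jc j (Pc j x))) := fun i j => rfl
  calc ∑ i, ∑ j, Jc i ((toMat S) i j (Pc j x))
      = ∑ j, ∑ i, Jc i (Pc i (S (Jc j (Pc j x)))) := by
        rw [Finset.sum_comm]
        exact Finset.sum_congr rfl fun j _ => Finset.sum_congr rfl fun i _ => by rw [this]
    _ = ∑ j, S (Jc j (Pc j x)) := Finset.sum_congr rfl fun j _ => sum_Jc_Pc _
    _ = S x := by rw [← map_sum, sum_Jc_Pc]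

private lemma toOp_injective :
    Function.Injective (toOp (G := G)) := by
  intro m m' h
  ext i j g
  have key := congrArg (fun S => Pc i (S (Jc j g))) h
  simp only [Pc_toOp, Pc_Jc] at key
  have hh : ∀ mm : Matrix (Fin 2) (Fin 2) (G →L[ℂ] G),
      ∑ k, mm i k (if k = j then g else 0) = mm i j g := by
    intro mm
    rw [Finset.sum_eq_single j]
    · simp
    · intro b _ hb; simp [hb]
    · simp
  rw [hh, hh] at key
  exact key

private lemma exists_sq (x y : Matrix (Fin 2) (Fin 2) (G →L[ℂ] G)) :
    ∃ r, star x * x + star y * y = star r * r := by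
  have h0 : (0 : WithLp 2 (G × G) →L[ℂ] WithLp 2 (G × G)) ≤ toOp (star x * x + star y * y) := by
    rw [toOp_add, toOp_mul, toOp_mul, toOp_star, toOp_star]
    exact add_nonneg (star_mul_self_nonneg _) (star_mul_self_nonneg _)
  set s := CFC.sqrt (toOp (star x * x + star y * y)) with hs
  have hsq : s * s = toOp (star x * x + star y * y) := CFC.sqrt_mul_sqrt_self _ h0
  have hsa : star s = s := by
    have := (IsSelfAdjoint.of_nonneg (CFC.sqrt_nonneg (toOp (star x * x + star y * y)))).star_eq
    exact this
  refine ⟨toMat s, toOp_injective ?_⟩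
  rw [toOp_mul, toOp_star, toOp_toMat, hsa, hsq]

end Statement15Aux

open Matrix in
theorem statement15
    {G : Type*} [NormedAddCommGroup G] [InnerProductSpace ℂ G] [CompleteSpace G]
    (θ₁ θ₂ : (G →L[ℂ] G) →⋆ₐ[ℂ] (G →L[ℂ] G))
    (v₁ v₂ : G →L[ℂ] G)
    (hv₁ : star v₁ * v₁ = 1) (hv₂ : star v₂ * v₂ = 1)
    (hint₁ : ∀ a : G →L[ℂ] G, θ₁ a * v₁ = v₁ * a)
    (hint₂ : ∀ a : G →L[ℂ] G, θ₂ a * v₂ = v₂ * a)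
    (T : Matrix (Fin 2) (Fin 2) (G →L[ℂ] G) → Matrix (Fin 2) (Fin 2) (G →L[ℂ] G))
    (hT : ∀ m, T m = !![θ₁ (m 0 0), v₁ * m 0 1 * star v₂;
                       v₂ * m 1 0 * star v₁, θ₂ (m 1 1)]) :
    T 1 = 1 ∧
    (∀ m, T (star m) = star (T m)) ∧
    ∀ (n : ℕ) (b c : Fin n → Matrix (Fin 2) (Fin 2) (G →L[ℂ] G)),
      ∃ r : Matrix (Fin 2) (Fin 2) (G →L[ℂ] G),
        ∑ i, ∑ j, star (c i) * T (star (b i) * b j) * c j = star r * r := by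
  -- basic operator facts
  have hv₁' : ∀ a : G →L[ℂ] G, star v₁ * θ₁ a = a * star v₁ := by
    intro a
    have := congrArg star (hint₁ (star a))
    simpa [StarMul.star_mul, map_star, star_star] using this
  have hv₂' : ∀ a : G →L[ℂ] G, star v₂ * θ₂ a = a * star v₂ := by
    intro a
    have := congrArg star (hint₂ (star a))
    simpa [StarMul.star_mul, map_star, star_star] using this
  set q₁ : G →L[ℂ] G := 1 - v₁ * star v₁ with hq₁def
  set q₂ : G →L[ℂ] G := 1 - v₂ * star v₂ with hq₂def
  have hq₁sa : star q₁ = q₁ := by simp [hq₁def, star_sub, StarMul.star_mul]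
  have hq₂sa : star q₂ = q₂ := by simp [hq₂def, star_sub, StarMul.star_mul]
  have hcomm₁ : ∀ a : G →L[ℂ] G, q₁ * θ₁ a = θ₁ a * q₁ := by
    intro a
    simp only [hq₁def, sub_mul, mul_sub, one_mul, mul_one]
    congr 1
    rw [mul_assoc, hv₁' a, ← mul_assoc, ← hint₁ a, mul_assoc]
  have hcomm₂ : ∀ a : G →L[ℂ] G, q₂ * θ₂ a = θ₂ a * q₂ := by
    intro a
    simp only [hq₂def, sub_mul, mul_sub, one_mul, mul_one]
    congr 1
    rw [mul_assoc, hv₂' a, ← mul_assoc, ← hint₂ a, mul_assoc]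
  have hq₁idem : q₁ * q₁ = q₁ := by
    simp only [hq₁def, sub_mul, mul_sub, one_mul, mul_one]
    rw [mul_assoc, ← mul_assoc (star v₁) v₁, hv₁, one_mul]
    abel
  have hq₂idem : q₂ * q₂ = q₂ := by
    simp only [hq₂def, sub_mul, mul_sub, one_mul, mul_one]
    rw [mul_assoc, ← mul_assoc (star v₂) v₂, hv₂, one_mul]
    abel
  have lemB₁ : ∀ u w : G →L[ℂ] G,
      star (θ₁ u * q₁) * (θ₁ w * q₁) = θ₁ (star u * w) * q₁ := by
    intro u w
    rw [StarMul.star_mul, hq₁sa, ← map_star]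
    calc q₁ * θ₁ (star u) * (θ₁ w * q₁)
        = θ₁ (star u) * q₁ * (θ₁ w * q₁) := by rw [hcomm₁]
      _ = θ₁ (star u) * (q₁ * θ₁ w * q₁) := by rw [mul_assoc, ← mul_assoc q₁]
      _ = θ₁ (star u) * (θ₁ w * q₁ * q₁) := by rw [hcomm₁]
      _ = θ₁ (star u) * (θ₁ w * q₁) := by rw [mul_assoc (θ₁ w), hq₁idem]
      _ = θ₁ (star u * w) * q₁ := by rw [_root_.map_mul, mul_assoc]
  have lemB₂ : ∀ u w : G →L[ℂ] G,
      star (θ₂ u * q₂) * (θ₂ w * q₂) = θ₂ (star u * w) * q₂ := by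
    intro u w
    rw [StarMul.star_mul, hq₂sa, ← map_star]
    calc q₂ * θ₂ (star u) * (θ₂ w * q₂)
        = θ₂ (star u) * q₂ * (θ₂ w * q₂) := by rw [hcomm₂]
      _ = θ₂ (star u) * (q₂ * θ₂ w * q₂) := by rw [mul_assoc, ← mul_assoc q₂]
      _ = θ₂ (star u) * (θ₂ w * q₂ * q₂) := by rw [hcomm₂]
      _ = θ₂ (star u) * (θ₂ w * q₂) := by rw [mul_assoc (θ₂ w), hq₂idem]
      _ = θ₂ (star u * w) * q₂ := by rw [_root_.map_mul, mul_assoc]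
  have lemA₁ : ∀ a : G →L[ℂ] G, v₁ * a * star v₁ = θ₁ a * (v₁ * star v₁) := by
    intro a; rw [← hint₁ a, mul_assoc]
  have lemA₂ : ∀ a : G →L[ℂ] G, v₂ * a * star v₂ = θ₂ a * (v₂ * star v₂) := by
    intro a; rw [← hint₂ a, mul_assoc]
  refine ⟨?_, ?_, ?_⟩
  · rw [hT]
    have h00 : (1 : Matrix (Fin 2) (Fin 2) (G →L[ℂ] G)) 0 0 = 1 := rfl
    have h11 : (1 : Matrix (Fin 2) (Fin 2) (G →L[ℂ] G)) 1 1 = 1 := rfl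
    have h01 : (1 : Matrix (Fin 2) (Fin 2) (G →L[ℂ] G)) 0 1 = 0 := rfl
    have h10 : (1 : Matrix (Fin 2) (Fin 2) (G →L[ℂ] G)) 1 0 = 0 := rfl
    rw [h00, h11, h01, h10, _root_.map_one, _root_.map_one]
    simp [Matrix.one_fin_two]
  · intro m
    rw [hT, hT]
    ext i j
    fin_cases i <;> fin_cases j <;>
      simp [Matrix.star_apply, map_star, StarMul.star_mul, mul_assoc]
  · intro n b c
    set Vs : Matrix (Fin 2) (Fin 2) (G →L[ℂ] G) := !![star v₁, 0; 0, star v₂] with hVs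
    set Gm : Matrix (Fin 2) (Fin 2) (G →L[ℂ] G) → Matrix (Fin 2) (Fin 2) (G →L[ℂ] G) :=
      fun x => !![θ₁ (x 0 0) * q₁, 0; θ₁ (x 1 0) * q₁, 0] with hGm
    set Hm : Matrix (Fin 2) (Fin 2) (G →L[ℂ] G) → Matrix (Fin 2) (Fin 2) (G →L[ℂ] G) :=
      fun x => !![0, θ₂ (x 0 1) * q₂; 0, θ₂ (x 1 1) * q₂] with hHm
    have key : ∀ x y : Matrix (Fin 2) (Fin 2) (G →L[ℂ] G),
        T (star x * y) = star Vs * (star x * y) * Vs + star (Gm x) * Gm y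
          + star (Hm x) * Hm y := by
      intro x y
      rw [hT, ← Matrix.ext_iff]
      intro i j
      fin_cases i <;> fin_cases j <;>
        simp [hVs, hGm, hHm, Fin.zero_eta, Fin.mk_one, Matrix.add_apply,
          Matrix.mul_apply, Fin.sum_univ_two, Matrix.star_apply,
          Matrix.cons_val', Matrix.cons_val_zero,
          Matrix.cons_val_one, Matrix.head_cons, Matrix.head_fin_const, Matrix.empty_val',
          Matrix.cons_val_fin_one, star_zero, star_star, zero_mul, mul_zero,
          add_zero, zero_add, Fin.isValue]
      · -- entry (0,0)
        have lemC₁ : ∀ u w : G →L[ℂ] G,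
            star q₁ * star (θ₁ u) * (θ₁ w * q₁) = θ₁ (star u * w) * q₁ := by
          intro u w
          rw [← StarMul.star_mul (θ₁ u) q₁]
          exact lemB₁ u w
        rw [lemC₁, lemC₁, lemA₁]
        have h1 : v₁ * star v₁ + q₁ = 1 := by rw [hq₁def]; abel
        have e1 : θ₁ (star (x 0 0) * y 0 0) * q₁ + θ₁ (star (x 1 0) * y 1 0) * q₁
            = θ₁ (star (x 0 0) * y 0 0 + star (x 1 0) * y 1 0) * q₁ := by
          rw [_root_.map_add, add_mul]
        rw [e1, ← mul_add, h1, mul_one, _root_.map_add, _root_.map_mul, _root_.map_mul]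
      · -- entry (1,1)
        have lemC₂ : ∀ u w : G →L[ℂ] G,
            star q₂ * star (θ₂ u) * (θ₂ w * q₂) = θ₂ (star u * w) * q₂ := by
          intro u w
          rw [← StarMul.star_mul (θ₂ u) q₂]
          exact lemB₂ u w
        rw [lemC₂, lemC₂, lemA₂]
        have h1 : v₂ * star v₂ + q₂ = 1 := by rw [hq₂def]; abel
        have e1 : θ₂ (star (x 0 1) * y 0 1) * q₂ + θ₂ (star (x 1 1) * y 1 1) * q₂
            = θ₂ (star (x 0 1) * y 0 1 + star (x 1 1) * y 1 1) * q₂ := by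
          rw [_root_.map_add, add_mul]
        rw [e1, ← mul_add, h1, mul_one, _root_.map_add, _root_.map_mul, _root_.map_mul]
    -- now assemble the sum
    set F := ∑ j, b j * Vs * c j with hF
    set GG := ∑ j, Gm (b j) * c j with hGG
    set HH := ∑ j, Hm (b j) * c j with hHH
    have main : ∀ i j, star (c i) * T (star (b i) * b j) * c j
        = star (b i * Vs * c i) * (b j * Vs * c j)
          + star (Gm (b i) * c i) * (Gm (b j) * c j)
          + star (Hm (b i) * c i) * (Hm (b j) * c j) := by
      intro i j
      rw [key]
      simp only [StarMul.star_mul]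
      noncomm_ring
    have hsum : ∑ i, ∑ j, star (c i) * T (star (b i) * b j) * c j
        = star F * F + star GG * GG + star HH * HH := by
      calc ∑ i, ∑ j, star (c i) * T (star (b i) * b j) * c j
          = ∑ i, ∑ j, (star (b i * Vs * c i) * (b j * Vs * c j)
              + star (Gm (b i) * c i) * (Gm (b j) * c j)
              + star (Hm (b i) * c i) * (Hm (b j) * c j)) :=
            Finset.sum_congr rfl fun i _ => Finset.sum_congr rfl fun j _ => main i j
        _ = star F * F + star GG * GG + star HH * HH := by
            simp only [Finset.sum_add_distrib]
            rw [hF, hGG, hHH, star_sum, star_sum, star_sum,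
              Finset.sum_mul_sum, Finset.sum_mul_sum, Finset.sum_mul_sum]
    obtain ⟨r₂, hr₂⟩ := exists_sq GG HH
    obtain ⟨r, hr⟩ := exists_sq F r₂
    exact ⟨r, by rw [hsum, add_assoc, hr₂, hr]⟩
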